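/- Let P : [-1,1]² → [0,∞) be bounded, measurable and symmetric (P(w,w_*) = P(w_*,w)), let ε > 0, ξ > 0, and let (f_t^S, f_t^I) solve the pure social kinetic system with f_t = f_t^S + f_t^I a probability measure for all t. Then the variance of f_t satisfies the dissipation identity: ε d/dt Var[f_t] = −ξ ∬ (w − w_*)² P(w,w_*) (1 − ξP(w,w_*)) df_t(w) df_t(w_*) for all t ≥ 0. -/

import Mathlib

/-!
Variance dissipation identity for the pure social kinetic system.
-/

open MeasureTheory Set Filter

noncomputable section

/-- The measure is supported in `[-1,1]`. -/
def SuppIcc (μ : Measure ℝ) : Prop := μ (Icc (-1 : ℝ) 1)ᶜ = 0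

/-- Variance of a (probability) measure on `ℝ`. -/
def var (f : Measure ℝ) : ℝ := (∫ w, w ^ 2 ∂f) - (∫ w, w ∂f) ^ 2

/-- `(fS, fI)` solves the pure social kinetic system: for every continuous test function `φ`
and every `t ≥ 0`,
`d/dt ∫φ dfH_t = (1/ε)∬[φ(w + ξP(w,w₁)(w₁-w)) - φ(w)] dfH_t(w) df_t(w₁)`, `H ∈ {S,I}`,
where `f_t = fS_t + fI_t`. -/
def SolvesPureSocial (ε ξ : ℝ) (P : ℝ → ℝ → ℝ) (fS fI : ℝ → Measure ℝ) : Prop :=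
  ∀ φ : C(ℝ, ℝ), ∀ t ∈ Ici (0 : ℝ),
    HasDerivWithinAt (fun s => ∫ w, φ w ∂(fS s))
      ((1 / ε) * ∫ w, ∫ w₁, (φ (w + ξ * P w w₁ * (w₁ - w)) - φ w) ∂(fS t + fI t) ∂(fS t))
      (Ici 0) t ∧
    HasDerivWithinAt (fun s => ∫ w, φ w ∂(fI s))
      ((1 / ε) * ∫ w, ∫ w₁, (φ (w + ξ * P w w₁ * (w₁ - w)) - φ w) ∂(fS t + fI t) ∂(fI t))
      (Ici 0) t

private lemma ae_Icc {μ : Measure ℝ} (hμ : SuppIcc μ) :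
    ∀ᵐ w ∂μ, w ∈ Icc (-1:ℝ) 1 := by
  rw [ae_iff]
  exact hμ

private lemma ae_Icc_prod {μ ν : Measure ℝ} [IsFiniteMeasure μ] [IsFiniteMeasure ν]
    (hμ : SuppIcc μ) (hν : SuppIcc ν) :
    ∀ᵐ p : ℝ × ℝ ∂(μ.prod ν), p.1 ∈ Icc (-1:ℝ) 1 ∧ p.2 ∈ Icc (-1:ℝ) 1 := by
  have h1 : ∀ᵐ p : ℝ × ℝ ∂(μ.prod ν), p.1 ∈ Icc (-1:ℝ) 1 := by
    rw [ae_iff]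
    have h : {p : ℝ × ℝ | ¬ p.1 ∈ Icc (-1:ℝ) 1} = (Icc (-1:ℝ) 1)ᶜ ×ˢ (univ : Set ℝ) := by
      ext p; simp
    rw [h, Measure.prod_prod, hμ, zero_mul]
  have h2 : ∀ᵐ p : ℝ × ℝ ∂(μ.prod ν), p.2 ∈ Icc (-1:ℝ) 1 := by
    rw [ae_iff]
    have h : {p : ℝ × ℝ | ¬ p.2 ∈ Icc (-1:ℝ) 1} = (univ : Set ℝ) ×ˢ (Icc (-1:ℝ) 1)ᶜ := by
      ext p; simp
    rw [h, Measure.prod_prod, hν, mul_zero]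
  exact h1.and h2

private lemma integrable_cont {μ : Measure ℝ} [IsFiniteMeasure μ] (hμ : SuppIcc μ)
    {g : ℝ → ℝ} (hg : Continuous g) : Integrable g μ := by
  obtain ⟨M, hM⟩ := (isCompact_Icc (a := (-1:ℝ)) (b := 1)).exists_bound_of_continuousOn
    hg.continuousOn
  exact Integrable.mono' (integrable_const M) hg.aestronglyMeasurable
    (by filter_upwards [ae_Icc hμ] with w hw using hM w hw)

private lemma integrable_P {P : ℝ → ℝ → ℝ} (hPmeas : Measurable (Function.uncurry P))
    {C : ℝ} (hC : ∀ w ∈ Icc (-1:ℝ) 1, ∀ w₁ ∈ Icc (-1:ℝ) 1, P w w₁ ∈ Icc 0 C)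
    {μ ν : Measure ℝ} [IsFiniteMeasure μ] [IsFiniteMeasure ν]
    (hμ : SuppIcc μ) (hν : SuppIcc ν)
    {G : ℝ × ℝ × ℝ → ℝ} (hG : Continuous G) :
    Integrable (fun p : ℝ × ℝ => G (p.1, p.2, P p.1 p.2)) (μ.prod ν) := by
  obtain ⟨M, hM⟩ := ((isCompact_Icc (a := (-1:ℝ)) (b := 1)).prod
    ((isCompact_Icc (a := (-1:ℝ)) (b := 1)).prod
      (isCompact_Icc (a := (0:ℝ)) (b := C)))).exists_bound_of_continuousOn hG.continuousOn
  refine Integrable.mono' (integrable_const M) ?_ ?_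
  · exact (hG.measurable.comp
      (measurable_fst.prodMk (measurable_snd.prodMk hPmeas))).aestronglyMeasurable
  · filter_upwards [ae_Icc_prod hμ hν] with p hp
    exact hM _ (Set.mk_mem_prod hp.1 (Set.mk_mem_prod hp.2 (hC _ hp.1 _ hp.2)))

/-- **Variance dissipation identity.** For the pure social kinetic dynamics with `P` bounded,
measurable and symmetric on `[-1,1]²`, the variance of `f_t = fS_t + fI_t` satisfies
`ε d/dt Var[f_t] = -ξ ∬ (w - w₁)² P(w,w₁)(1 - ξP(w,w₁)) df_t(w) df_t(w₁)` for all `t ≥ 0`. -/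
theorem variance_dissipation_pure_social
    (ε ξ : ℝ) (hε : 0 < ε) (hξ : 0 < ξ)
    (P : ℝ → ℝ → ℝ)
    (hPmeas : Measurable (Function.uncurry P))
    (hPbdd : BddAbove (Set.image2 P (Icc (-1 : ℝ) 1) (Icc (-1 : ℝ) 1)))
    (hPpos : ∀ w ∈ Icc (-1 : ℝ) 1, ∀ w₁ ∈ Icc (-1 : ℝ) 1, 0 ≤ P w w₁)
    (hPsymm : ∀ w ∈ Icc (-1 : ℝ) 1, ∀ w₁ ∈ Icc (-1 : ℝ) 1, P w w₁ = P w₁ w)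
    (fS fI : ℝ → Measure ℝ)
    (hreg : ∀ t ∈ Ici (0 : ℝ), IsFiniteMeasure (fS t) ∧ IsFiniteMeasure (fI t) ∧
      SuppIcc (fS t) ∧ SuppIcc (fI t) ∧ IsProbabilityMeasure (fS t + fI t))
    (hsol : SolvesPureSocial ε ξ P fS fI) :
    ∀ t ∈ Ici (0 : ℝ),
      HasDerivWithinAt (fun s => var (fS s + fI s))
        (-(ξ / ε) * ∫ w, ∫ w₁, (w - w₁) ^ 2 * P w w₁ * (1 - ξ * P w w₁)
          ∂(fS t + fI t) ∂(fS t + fI t))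
        (Ici 0) t := by
  intro t ht
  obtain ⟨hfinS, hfinI, hsuppS, hsuppI, hprob⟩ := hreg t ht
  haveI := hfinS; haveI := hfinI; haveI := hprob
  have hC : ∀ w ∈ Icc (-1:ℝ) 1, ∀ w₁ ∈ Icc (-1:ℝ) 1,
      P w w₁ ∈ Icc 0 (sSup (Set.image2 P (Icc (-1:ℝ) 1) (Icc (-1:ℝ) 1))) :=
    fun w hw w₁ hw₁ => ⟨hPpos w hw w₁ hw₁, le_csSup hPbdd (mem_image2_of_mem hw hw₁)⟩
  have hsuppf : SuppIcc (fS t + fI t) := by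
    unfold SuppIcc at *
    rw [Measure.add_apply, hsuppS, hsuppI, add_zero]
  -- abbreviations
  set f : Measure ℝ := fS t + fI t with hfdef
  set m : ℝ := ∫ w, w ∂f with hmdef
  -- integral over sum measure for continuous integrands, at every s ≥ 0
  have hint : ∀ s ∈ Ici (0:ℝ), ∀ g : ℝ → ℝ, Continuous g →
      (∫ w, g w ∂(fS s + fI s)) = (∫ w, g w ∂(fS s)) + ∫ w, g w ∂(fI s) := by
    intro s hs g hg
    obtain ⟨h1, h2, h3, h4, _⟩ := hreg s hs
    exact integral_add_measure (integrable_cont (μ := fS s) h3 hg)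
      (integrable_cont (μ := fI s) h4 hg)
  -- product-level integrabilities
  have ig2 : Integrable (fun p : ℝ × ℝ =>
      (p.1 + ξ * P p.1 p.2 * (p.2 - p.1)) ^ 2 - p.1 ^ 2) (f.prod f) :=
    integrable_P hPmeas hC hsuppf hsuppf
      (G := fun x : ℝ × ℝ × ℝ => (x.1 + ξ * x.2.2 * (x.2.1 - x.1)) ^ 2 - x.1 ^ 2) (by fun_prop)
  have ig1 : Integrable (fun p : ℝ × ℝ =>
      (p.1 + ξ * P p.1 p.2 * (p.2 - p.1)) - p.1) (f.prod f) :=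
    integrable_P hPmeas hC hsuppf hsuppf
      (G := fun x : ℝ × ℝ × ℝ => (x.1 + ξ * x.2.2 * (x.2.1 - x.1)) - x.1) (by fun_prop)
  have ijf : Integrable (fun p : ℝ × ℝ =>
      P p.1 p.2 * (p.2 - p.1) * (p.1 - m)) (f.prod f) :=
    integrable_P hPmeas hC hsuppf hsuppf
      (G := fun x : ℝ × ℝ × ℝ => x.2.2 * (x.2.1 - x.1) * (x.1 - m)) (by fun_prop)
  have ijf' : Integrable (fun p : ℝ × ℝ =>
      P p.1 p.2 * (p.1 - p.2) * (p.2 - m)) (f.prod f) :=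
    integrable_P hPmeas hC hsuppf hsuppf
      (G := fun x : ℝ × ℝ × ℝ => x.2.2 * (x.1 - x.2.1) * (x.2.1 - m)) (by fun_prop)
  have ikf : Integrable (fun p : ℝ × ℝ =>
      (P p.1 p.2 * (p.2 - p.1)) ^ 2) (f.prod f) :=
    integrable_P hPmeas hC hsuppf hsuppf
      (G := fun x : ℝ × ℝ × ℝ => (x.2.2 * (x.2.1 - x.1)) ^ 2) (by fun_prop)
  have iqf : Integrable (fun p : ℝ × ℝ =>
      (p.1 - p.2) ^ 2 * P p.1 p.2) (f.prod f) :=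
    integrable_P hPmeas hC hsuppf hsuppf
      (G := fun x : ℝ × ℝ × ℝ => (x.1 - x.2.1) ^ 2 * x.2.2) (by fun_prop)
  have iif : Integrable (fun p : ℝ × ℝ =>
      (p.1 - p.2) ^ 2 * P p.1 p.2 * (1 - ξ * P p.1 p.2)) (f.prod f) :=
    integrable_P hPmeas hC hsuppf hsuppf
      (G := fun x : ℝ × ℝ × ℝ => (x.1 - x.2.1) ^ 2 * x.2.2 * (1 - ξ * x.2.2)) (by fun_prop)
  -- combining outer integrals over `fS t` and `fI t` into `f`, then Fubini
  have hcomb : ∀ g : ℝ × ℝ → ℝ, Integrable g (f.prod f) →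
      (∫ w, ∫ w₁, g (w, w₁) ∂f ∂(fS t)) + (∫ w, ∫ w₁, g (w, w₁) ∂f ∂(fI t))
        = ∫ p, g p ∂(f.prod f) := by
    intro g hg
    rw [← integral_add_measure
      (hg.integral_prod_left.mono_measure (Measure.le_add_right le_rfl))
      (hg.integral_prod_left.mono_measure (Measure.le_add_left le_rfl))]
    exact (integral_prod g hg).symm
  -- the two test functions
  obtain ⟨h2S, h2I⟩ := hsol ⟨fun w => w ^ 2, by fun_prop⟩ t ht
  obtain ⟨h1S, h1I⟩ := hsol ⟨fun w => w, by fun_prop⟩ t ht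
  simp only [ContinuousMap.coe_mk] at h2S h2I h1S h1I
  have e2 : (∫ w, ∫ w₁, ((w + ξ * P w w₁ * (w₁ - w)) ^ 2 - w ^ 2) ∂f ∂(fS t))
      + (∫ w, ∫ w₁, ((w + ξ * P w w₁ * (w₁ - w)) ^ 2 - w ^ 2) ∂f ∂(fI t))
      = ∫ p : ℝ × ℝ, ((p.1 + ξ * P p.1 p.2 * (p.2 - p.1)) ^ 2 - p.1 ^ 2) ∂(f.prod f) :=
    hcomb _ ig2
  have e1 : (∫ w, ∫ w₁, (w + ξ * P w w₁ * (w₁ - w) - w) ∂f ∂(fS t))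
      + (∫ w, ∫ w₁, (w + ξ * P w w₁ * (w₁ - w) - w) ∂f ∂(fI t))
      = ∫ p : ℝ × ℝ, ((p.1 + ξ * P p.1 p.2 * (p.2 - p.1)) - p.1) ∂(f.prod f) :=
    hcomb _ ig1
  have hA := (h2S.add h2I).congr
    (fun s hs => hint s hs _ (by fun_prop : Continuous fun w : ℝ => w ^ 2))
    (hint t ht _ (by fun_prop : Continuous fun w : ℝ => w ^ 2))
  have hB := (h1S.add h1I).congr
    (fun s hs => hint s hs _ (by fun_prop : Continuous fun w : ℝ => w))
    (hint t ht _ (by fun_prop : Continuous fun w : ℝ => w))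
  rw [← mul_add, e2] at hA
  rw [← mul_add, e1] at hB
  -- symmetrization
  have hswap : (∫ p : ℝ × ℝ, P p.1 p.2 * (p.1 - p.2) * (p.2 - m) ∂(f.prod f))
      = ∫ p : ℝ × ℝ, P p.1 p.2 * (p.2 - p.1) * (p.1 - m) ∂(f.prod f) := by
    have h0 := integral_prod_swap (μ := f) (ν := f)
      (fun p : ℝ × ℝ => P p.1 p.2 * (p.2 - p.1) * (p.1 - m))
    rw [← h0]
    refine integral_congr_ae ?_
    filter_upwards [ae_Icc_prod hsuppf hsuppf] with p hp
    simp only [Prod.fst_swap, Prod.snd_swap]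
    rw [hPsymm _ hp.1 _ hp.2]
  have hQ : (∫ p : ℝ × ℝ, P p.1 p.2 * (p.2 - p.1) * (p.1 - m) ∂(f.prod f)) * 2
      = -∫ p : ℝ × ℝ, (p.1 - p.2) ^ 2 * P p.1 p.2 ∂(f.prod f) := by
    have h1 : (∫ p : ℝ × ℝ, P p.1 p.2 * (p.2 - p.1) * (p.1 - m) ∂(f.prod f)) * 2
        = (∫ p : ℝ × ℝ, P p.1 p.2 * (p.2 - p.1) * (p.1 - m) ∂(f.prod f))
          + ∫ p : ℝ × ℝ, P p.1 p.2 * (p.1 - p.2) * (p.2 - m) ∂(f.prod f) := by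
      rw [hswap]; ring
    rw [h1, ← integral_add ijf ijf', ← integral_neg]
    exact integral_congr_ae (Eventually.of_forall fun p => by ring)
  -- pieces of the algebraic identity
  have eL : ∫ p : ℝ × ℝ, (((p.1 + ξ * P p.1 p.2 * (p.2 - p.1)) ^ 2 - p.1 ^ 2)
        - 2 * m * ((p.1 + ξ * P p.1 p.2 * (p.2 - p.1)) - p.1)) ∂(f.prod f)
      = (∫ p : ℝ × ℝ, ((p.1 + ξ * P p.1 p.2 * (p.2 - p.1)) ^ 2 - p.1 ^ 2) ∂(f.prod f))
        - 2 * m * ∫ p : ℝ × ℝ, ((p.1 + ξ * P p.1 p.2 * (p.2 - p.1)) - p.1) ∂(f.prod f) := by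
    rw [integral_sub ig2 (ig1.const_mul (2 * m)), integral_const_mul]
  have eM : ∫ p : ℝ × ℝ, (((p.1 + ξ * P p.1 p.2 * (p.2 - p.1)) ^ 2 - p.1 ^ 2)
        - 2 * m * ((p.1 + ξ * P p.1 p.2 * (p.2 - p.1)) - p.1)) ∂(f.prod f)
      = ∫ p : ℝ × ℝ, (2 * ξ * (P p.1 p.2 * (p.2 - p.1) * (p.1 - m))
        + ξ ^ 2 * (P p.1 p.2 * (p.2 - p.1)) ^ 2) ∂(f.prod f) :=
    integral_congr_ae (Eventually.of_forall fun p => by ring)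
  have eR : ∫ p : ℝ × ℝ, (2 * ξ * (P p.1 p.2 * (p.2 - p.1) * (p.1 - m))
        + ξ ^ 2 * (P p.1 p.2 * (p.2 - p.1)) ^ 2) ∂(f.prod f)
      = 2 * ξ * (∫ p : ℝ × ℝ, P p.1 p.2 * (p.2 - p.1) * (p.1 - m) ∂(f.prod f))
        + ξ ^ 2 * ∫ p : ℝ × ℝ, (P p.1 p.2 * (p.2 - p.1)) ^ 2 ∂(f.prod f) := by
    rw [integral_add (ijf.const_mul (2 * ξ)) (ikf.const_mul (ξ ^ 2)),
      integral_const_mul, integral_const_mul]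
  have eI : ∫ p : ℝ × ℝ, (p.1 - p.2) ^ 2 * P p.1 p.2 * (1 - ξ * P p.1 p.2) ∂(f.prod f)
      = (∫ p : ℝ × ℝ, (p.1 - p.2) ^ 2 * P p.1 p.2 ∂(f.prod f))
        - ξ * ∫ p : ℝ × ℝ, (P p.1 p.2 * (p.2 - p.1)) ^ 2 ∂(f.prod f) := by
    rw [← integral_const_mul, ← integral_sub iqf (ikf.const_mul ξ)]
    exact integral_congr_ae (Eventually.of_forall fun p => by ring)
  have hkey : (∫ p : ℝ × ℝ, ((p.1 + ξ * P p.1 p.2 * (p.2 - p.1)) ^ 2 - p.1 ^ 2) ∂(f.prod f))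
      - 2 * m * (∫ p : ℝ × ℝ, ((p.1 + ξ * P p.1 p.2 * (p.2 - p.1)) - p.1) ∂(f.prod f))
      = -ξ * ∫ p : ℝ × ℝ, (p.1 - p.2) ^ 2 * P p.1 p.2 * (1 - ξ * P p.1 p.2) ∂(f.prod f) := by
    rw [← eL, eM, eR, eI]
    linear_combination ξ * hQ
  have htarget : (∫ w, ∫ w₁, (w - w₁) ^ 2 * P w w₁ * (1 - ξ * P w w₁) ∂f ∂f)
      = ∫ p : ℝ × ℝ, (p.1 - p.2) ^ 2 * P p.1 p.2 * (1 - ξ * P p.1 p.2) ∂(f.prod f) :=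
    integral_prod _ iif |>.symm
  rw [htarget]
  have hvar := hA.sub (hB.pow 2)
  convert hvar using 1
  case e'_4 => rfl
  case e'_5 => rfl
  case e'_8 => rfl
  beta_reduce
  rw [← hfdef, ← hmdef]
  push_cast
  linear_combination (-(1 : ℝ)/ε) * hkey
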